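/- Let D ∈ ℝ³, let q₀ be a real polynomial of degree at most 2, and let Y : [t0,t1] → ℝ³ be a C³ solution of Y'''(t) + q₀(t)·(D × Y''(t)) − q₀''·(D × Y(t)) = 0. Then for every K ∈ ℝ³ with D × K = 0, the third derivative of the scalar function t ↦ ⟨Y(t), K⟩ vanishes identically on [t0,t1]; consequently ⟨Y(t), K⟩ agrees with a polynomial in t of degree at most 2. -/

import Mathlib

noncomputable section
open scoped RealInnerProductSpace

/-- `ℝ³` with the Euclidean inner product. -/
abbrev E3 : Type := EuclideanSpace ℝ (Fin 3)

/-- The cross product on `ℝ³`; with `⁅u,v⁆ := cross u v`, `ℝ³` is the Lie algebra `so(3)`. -/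
def cross (u v : E3) : E3 :=
  (WithLp.equiv 2 (Fin 3 → ℝ)).symm
    ![u 1 * v 2 - u 2 * v 1, u 2 * v 0 - u 0 * v 2, u 0 * v 1 - u 1 * v 0]

lemma clm_iterDW {F G : Type*} [NormedAddCommGroup F] [NormedSpace ℝ F]
    [NormedAddCommGroup G] [NormedSpace ℝ G] (L : F →L[ℝ] G) {f : ℝ → F} {s : Set ℝ} {n : ℕ}
    (hf : ContDiffOn ℝ n f s) (hs : UniqueDiffOn ℝ s) {x : ℝ} (hx : x ∈ s) :
    iteratedDerivWithin n (fun t => L (f t)) s x = L (iteratedDerivWithin n f s x) := by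
  simp only [iteratedDerivWithin]
  rw [show (fun t => L (f t)) = L ∘ f from rfl,
    L.iteratedFDerivWithin_comp_left (hf x hx) hs hx le_rfl]
  rfl

lemma cross_inner_zero {D K : E3} (hK : cross D K = 0) (u : E3) : ⟪cross D u, K⟫ = 0 := by
  have h0 : D 1 * K 2 - D 2 * K 1 = 0 := by
    have := congrArg (fun w : E3 => w 0) hK; simpa [cross] using this
  have h1 : D 2 * K 0 - D 0 * K 2 = 0 := by
    have := congrArg (fun w : E3 => w 1) hK; simpa [cross] using this
  have h2 : D 0 * K 1 - D 1 * K 0 = 0 := by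
    have := congrArg (fun w : E3 => w 2) hK; simpa [cross] using this
  simp only [cross, PiLp.inner_apply, RCLike.inner_apply, conj_trivial, Fin.sum_univ_three,
    WithLp.equiv_symm_apply, Matrix.cons_val_zero, Matrix.cons_val_one, Matrix.head_cons,
    Matrix.cons_val_two, Matrix.tail_cons]
  linear_combination (-(u 0)) * h0 - (u 1) * h1 - (u 2) * h2

theorem stmt_7 (t0 t1 : ℝ) (ht : t0 < t1) (D : E3) (q0 : Polynomial ℝ)
    (hq0 : q0.degree ≤ 2) (Y : ℝ → E3)
    (hY : ContDiffOn ℝ 3 Y (Set.Icc t0 t1))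
    (hode : ∀ t ∈ Set.Icc t0 t1,
        iteratedDerivWithin 3 Y (Set.Icc t0 t1) t +
            q0.eval t • cross D (iteratedDerivWithin 2 Y (Set.Icc t0 t1) t) -
            (q0.derivative.derivative).eval t • cross D (Y t) = 0) :
    ∀ K : E3, cross D K = 0 →
      (∀ t ∈ Set.Icc t0 t1,
          iteratedDerivWithin 3 (fun s => ⟪Y s, K⟫) (Set.Icc t0 t1) t = 0) ∧
        ∃ p : Polynomial ℝ, p.degree ≤ 2 ∧ ∀ t ∈ Set.Icc t0 t1, ⟪Y t, K⟫ = p.eval t := by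
  intro K hK
  set S : Set ℝ := Set.Icc t0 t1 with hS
  have hUD : UniqueDiffOn ℝ S := uniqueDiffOn_Icc ht
  have hgfun : (fun s => ⟪Y s, K⟫) = fun t => (innerSL ℝ K) (Y t) := by
    funext s; exact (real_inner_comm (Y s) K).symm
  have hg : ContDiffOn ℝ 3 (fun s => ⟪Y s, K⟫) S := by
    rw [hgfun]; exact hY.continuousLinearMap_comp (innerSL ℝ K)
  -- third derivative vanishes
  have key : ∀ t ∈ S, iteratedDerivWithin 3 (fun s => ⟪Y s, K⟫) S t = 0 := by
    intro t htS
    rw [hgfun, clm_iterDW _ hY hUD htS]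
    have h3 : iteratedDerivWithin 3 Y S t =
        (q0.derivative.derivative).eval t • cross D (Y t) -
          q0.eval t • cross D (iteratedDerivWithin 2 Y S t) := by
      have := hode t htS
      linear_combination (norm := module) this
    have : (innerSL ℝ K) (iteratedDerivWithin 3 Y S t) = ⟪iteratedDerivWithin 3 Y S t, K⟫ :=
      real_inner_comm _ K
    rw [this, h3, inner_sub_left, inner_smul_left, inner_smul_left,
      cross_inner_zero hK, cross_inner_zero hK]
    simp
  refine ⟨key, ?_⟩
  -- build the polynomial
  set g : ℝ → ℝ := fun s => ⟪Y s, K⟫ with hgdef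
  set c0 : ℝ := g t0
  set c1 : ℝ := iteratedDerivWithin 1 g S t0
  set c2 : ℝ := iteratedDerivWithin 2 g S t0
  have hdiff2 : DifferentiableOn ℝ (iteratedDerivWithin 2 g S) S :=
    hg.differentiableOn_iteratedDerivWithin (by norm_num) hUD
  have hdiff1 : DifferentiableOn ℝ (iteratedDerivWithin 1 g S) S :=
    hg.differentiableOn_iteratedDerivWithin (by norm_num) hUD
  have hdiff0 : DifferentiableOn ℝ g S :=
    hg.differentiableOn (by norm_num)
  have h2const : ∀ t ∈ S, iteratedDerivWithin 2 g S t = c2 := by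
    intro t htS
    exact constant_of_derivWithin_zero hdiff2 (fun x hx => by
      rw [← iteratedDerivWithin_succ]
      exact key x (Set.mem_Icc_of_Ico hx)) t htS
  have h1lin : ∀ t ∈ S, iteratedDerivWithin 1 g S t = c1 + c2 * (t - t0) := by
    intro t htS
    refine eq_of_derivWithin_eq (g := fun t : ℝ => c1 + c2 * (t - t0)) hdiff1 ?_ ?_ (by norm_num [c1]) t htS
    · exact (Differentiable.differentiableOn (by fun_prop))
    · intro x hx
      have hx' : x ∈ S := Set.mem_Icc_of_Ico hx
      have hL : HasDerivAt (fun t : ℝ => c1 + c2 * (t - t0)) c2 x := by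
        simpa using (((hasDerivAt_id x).sub_const t0).const_mul c2).const_add c1
      rw [← iteratedDerivWithin_succ,
        hL.hasDerivWithinAt.derivWithin (hUD x hx')]
      exact (h2const x hx')
  have h0quad : ∀ t ∈ S, g t = c0 + c1 * (t - t0) + c2 / 2 * (t - t0) ^ 2 := by
    intro t htS
    refine eq_of_derivWithin_eq (g := fun t : ℝ => c0 + c1 * (t - t0) + c2 / 2 * (t - t0) ^ 2) hdiff0 ?_ ?_ (by norm_num [c0]) t htS
    · exact (Differentiable.differentiableOn (by fun_prop))
    · intro x hx
      have hx' : x ∈ S := Set.mem_Icc_of_Ico hx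
      have hL : HasDerivAt (fun t : ℝ => c0 + c1 * (t - t0) + c2 / 2 * (t - t0) ^ 2)
          (c1 + c2 * (x - t0)) x := by
        have h1 : HasDerivAt (fun t : ℝ => c0 + c1 * (t - t0)) c1 x := by
          simpa using (((hasDerivAt_id x).sub_const t0).const_mul c1).const_add c0
        have h2 : HasDerivAt (fun t : ℝ => c2 / 2 * (t - t0) ^ 2) (c2 * (x - t0)) x := by
          have := (((hasDerivAt_id x).sub_const t0).pow 2).const_mul (c2 / 2)
          convert this using 1
          all_goals try rfl
          simp
          ring
        exact h1.add h2
      rw [hL.hasDerivWithinAt.derivWithin (hUD x hx'),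
        ← iteratedDerivWithin_one]
      exact h1lin x hx'
  refine ⟨Polynomial.C c0 + Polynomial.C c1 * (Polynomial.X - Polynomial.C t0)
      + Polynomial.C (c2 / 2) * (Polynomial.X - Polynomial.C t0) ^ 2, ?_, ?_⟩
  · compute_degree
  · intro t htS
    have := h0quad t htS
    simpa using this
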